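/- The system x^α = Σ_{β ∈ I} a_{α,β} x^β (α ∈ J) has the maximal possible number #I of distinct solutions in K^n if and only if the matrices A_1, ..., A_n pairwise commute and each is diagonalizable. -/

import Mathlib

open Finset Matrix

/-- Total degree of a multi-index. -/
def mdeg {n : ℕ} (α : Fin n → ℕ) : ℕ := ∑ i, α i

/-- The set `I = {α ∈ ℤ₊ⁿ : |α| ≤ m}` of multi-indices of total degree at most `m`. -/
def Idx (n m : ℕ) : Finset (Fin n → ℕ) :=
  (Fintype.piFinset fun _ => Finset.range (m + 1)).filter fun α => mdeg α ≤ m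

/-- `I` is a lower set of multi-indices. -/
def IsLower {n : ℕ} (I : Finset (Fin n → ℕ)) : Prop :=
  ∀ β ∈ I, ∀ γ : Fin n → ℕ, (∀ i, γ i ≤ β i) → γ ∈ I

/-- `α` belongs to the border `J` of the lower set `I`. -/
def InBorder {n : ℕ} (I : Finset (Fin n → ℕ)) (α : Fin n → ℕ) : Prop :=
  α ∉ I ∧ ∃ β ∈ I, ∃ i : Fin n, α = β + Pi.single i 1

/-- The multiplication matrix `A_i`: its row indexed by `β ∈ I` is the standard basis
vector at `β + e_i` if `β + e_i ∈ I`, and is `(a_{β+e_i,γ})_{γ∈I}` otherwise. -/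
def multMat {K : Type*} [Field K] {n : ℕ} (I : Finset (Fin n → ℕ))
    (a : (Fin n → ℕ) → (Fin n → ℕ) → K) (i : Fin n) : Matrix ↥I ↥I K :=
  fun β γ =>
    if (β : Fin n → ℕ) + Pi.single i 1 ∈ I then
      (if (γ : Fin n → ℕ) = (β : Fin n → ℕ) + Pi.single i 1 then 1 else 0)
    else a ((β : Fin n → ℕ) + Pi.single i 1) γ

/-- The monomial vector `v(x) = (x^β)_{β ∈ I}`. -/
def monVec {K : Type*} [Field K] {n : ℕ} (I : Finset (Fin n → ℕ)) (x : Fin n → K) :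
    ↥I → K :=
  fun β => ∏ i, x i ^ (β : Fin n → ℕ) i

/-- `x` is a solution of the system (1): `x^α = Σ_{β∈I} a_{α,β} x^β` for all `|α| = m+1`. -/
def IsSol {K : Type*} [Field K] {n : ℕ} (m : ℕ)
    (a : (Fin n → ℕ) → (Fin n → ℕ) → K) (x : Fin n → K) : Prop :=
  ∀ α : Fin n → ℕ, mdeg α = m + 1 →
    ∏ i, x i ^ α i = ∑ β ∈ Idx n m, a α β * ∏ i, x i ^ β i

/-- `x` is a solution of the system for a general lower set `I` with border `J`. -/
def IsSolB {K : Type*} [Field K] {n : ℕ} (I : Finset (Fin n → ℕ))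
    (a : (Fin n → ℕ) → (Fin n → ℕ) → K) (x : Fin n → K) : Prop :=
  ∀ α : Fin n → ℕ, InBorder I α →
    ∏ i, x i ^ α i = ∑ β ∈ I, a α β * ∏ i, x i ^ β i

/-- A square matrix is diagonalizable (semisimple). -/
def Diagonalizable {K : Type*} [Field K] {ι : Type*} [Fintype ι] [DecidableEq ι]
    (A : Matrix ι ι K) : Prop :=
  ∃ P : Matrix ι ι K, IsUnit P.det ∧ (P⁻¹ * A * P).IsDiag

/-- The polynomial `P_α = x^α − Σ_{β∈I} a_{α,β} x^β`. -/
noncomputable def Pb {K : Type*} [Field K] {n : ℕ} (I : Finset (Fin n → ℕ))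
    (a : (Fin n → ℕ) → (Fin n → ℕ) → K) (α : Fin n → ℕ) : MvPolynomial (Fin n) K :=
  MvPolynomial.monomial (Finsupp.equivFunOnFinite.symm α) 1 -
    ∑ β ∈ I, MvPolynomial.C (a α β) * MvPolynomial.monomial (Finsupp.equivFunOnFinite.symm β) 1

/-- The ideal generated by the polynomials `P_α`, `α ∈ J`. -/
noncomputable def PIdeal {K : Type*} [Field K] {n : ℕ} (I : Finset (Fin n → ℕ))
    (a : (Fin n → ℕ) → (Fin n → ℕ) → K) : Ideal (MvPolynomial (Fin n) K) :=
  Ideal.span {p | ∃ α : Fin n → ℕ, InBorder I α ∧ p = Pb I a α}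

namespace Stmt6Aux

variable {K : Type*} [Field K] {n m : ℕ}

lemma mdeg_add (α β : Fin n → ℕ) : mdeg (α + β) = mdeg α + mdeg β := by
  simp [mdeg, Finset.sum_add_distrib]

lemma mdeg_single (i : Fin n) : mdeg (Pi.single i 1 : Fin n → ℕ) = 1 := by
  simp [mdeg, Finset.sum_pi_single']

lemma mem_Idx {α : Fin n → ℕ} : α ∈ Idx n m ↔ mdeg α ≤ m := by
  constructor
  · intro h; exact (Finset.mem_filter.mp h).2
  · intro h
    refine Finset.mem_filter.mpr ⟨Fintype.mem_piFinset.mpr fun i => ?_, h⟩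
    have : α i ≤ mdeg α := Finset.single_le_sum (f := α) (fun _ _ => Nat.zero_le _)
      (Finset.mem_univ i)
    exact Finset.mem_range.mpr (by omega)

lemma zero_mem_Idx : (0 : Fin n → ℕ) ∈ Idx n m := by
  rw [mem_Idx]; simp [mdeg]

lemma Idx_lower {β γ : Fin n → ℕ} (hβ : β ∈ Idx n m) (h : ∀ i, γ i ≤ β i) :
    γ ∈ Idx n m := by
  rw [mem_Idx] at hβ ⊢
  exact le_trans (Finset.sum_le_sum fun i _ => h i) hβ

lemma exists_add_single {α : Fin n → ℕ} (hα : mdeg α ≠ 0) :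
    ∃ (β : Fin n → ℕ) (i : Fin n), α = β + Pi.single i 1 ∧ mdeg β + 1 = mdeg α ∧
      ∀ j, β j ≤ α j := by
  have : ∃ i, α i ≠ 0 := by
    by_contra h
    push_neg at h
    exact hα (by simp [mdeg, h])
  obtain ⟨i, hi⟩ := this
  have hsplit : α = Function.update α i (α i - 1) + Pi.single i 1 := by
    funext j
    simp only [Pi.add_apply, Function.update_apply, Pi.single_apply]
    by_cases hj : j = i
    · subst hj; simp; omega
    · simp [hj]
  refine ⟨Function.update α i (α i - 1), i, hsplit, ?_, ?_⟩
  · have h1 : mdeg α = mdeg (Function.update α i (α i - 1)) + 1 := by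
      conv_lhs => rw [hsplit]
      rw [mdeg_add, mdeg_single]
    omega
  · intro j
    by_cases hj : j = i
    · subst hj; simp [Function.update_self]
    · simp [Function.update_of_ne hj]

lemma prod_pow_add_single (x : Fin n → K) (β : Fin n → ℕ) (i : Fin n) :
    (∏ j, x j ^ ((β + Pi.single i 1 : Fin n → ℕ)) j) = x i * ∏ j, x j ^ β j := by
  have h1 : (∏ j, x j ^ (Pi.single i 1 : Fin n → ℕ) j) = x i := by
    rw [Finset.prod_eq_single i]
    · simp
    · intro j _ hj; rw [Pi.single_eq_of_ne hj, pow_zero]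
    · intro h; exact absurd (Finset.mem_univ i) h
  calc (∏ j, x j ^ ((β + Pi.single i 1 : Fin n → ℕ)) j)
      = ∏ j, x j ^ β j * x j ^ (Pi.single i 1 : Fin n → ℕ) j := by
        apply Finset.prod_congr rfl; intro j _
        simp only [Pi.add_apply, pow_add]
    _ = (∏ j, x j ^ β j) * ∏ j, x j ^ (Pi.single i 1 : Fin n → ℕ) j :=
        Finset.prod_mul_distrib
    _ = x i * ∏ j, x j ^ β j := by rw [h1, mul_comm]

variable (a : (Fin n → ℕ) → (Fin n → ℕ) → K)

lemma mulVec_multMat_mem (w : ↥(Idx n m) → K) (i : Fin n) (β : ↥(Idx n m))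
    (h : (β : Fin n → ℕ) + Pi.single i 1 ∈ Idx n m) :
    (multMat (Idx n m) a i).mulVec w β = w ⟨(β : Fin n → ℕ) + Pi.single i 1, h⟩ := by
  rw [Matrix.mulVec, dotProduct]
  rw [Finset.sum_eq_single (⟨(β : Fin n → ℕ) + Pi.single i 1, h⟩ : ↥(Idx n m))]
  · simp [multMat, h]
  · intro γ _ hγ
    have : (γ : Fin n → ℕ) ≠ (β : Fin n → ℕ) + Pi.single i 1 := by
      intro hc; exact hγ (Subtype.ext hc)
    simp [multMat, h, this]
  · intro h'; exact absurd (Finset.mem_univ _) h'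

lemma mulVec_multMat_not_mem (w : ↥(Idx n m) → K) (i : Fin n) (β : ↥(Idx n m))
    (h : (β : Fin n → ℕ) + Pi.single i 1 ∉ Idx n m) :
    (multMat (Idx n m) a i).mulVec w β =
      ∑ γ ∈ (Idx n m).attach, a ((β : Fin n → ℕ) + Pi.single i 1) γ * w γ := by
  rw [Matrix.mulVec, dotProduct, Finset.univ_eq_attach]
  apply Finset.sum_congr rfl
  intro γ _
  simp [multMat, h]

lemma monVec_zero (x : Fin n → K) :
    monVec (Idx n m) x ⟨0, zero_mem_Idx⟩ = 1 := by
  simp [monVec]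

lemma monVec_ne_zero (x : Fin n → K) : monVec (Idx n m) x ≠ 0 := by
  intro h
  have := congrFun h ⟨0, zero_mem_Idx⟩
  rw [monVec_zero] at this
  simp at this

lemma monVec_apply (x : Fin n → K) (β : ↥(Idx n m)) :
    monVec (Idx n m) x β = ∏ j, x j ^ (β : Fin n → ℕ) j := rfl

/-- `x` is a solution iff `monVec x` is a joint eigenvector with eigenvalues `x i`. -/
lemma isSol_iff_eigen (x : Fin n → K) :
    IsSol m a x ↔ ∀ i, (multMat (Idx n m) a i).mulVec (monVec (Idx n m) x)
      = x i • monVec (Idx n m) x := by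
  constructor
  · intro hsol i
    funext β
    rw [Pi.smul_apply, smul_eq_mul]
    by_cases h : (β : Fin n → ℕ) + Pi.single i 1 ∈ Idx n m
    · rw [mulVec_multMat_mem a _ i β h, monVec_apply, monVec_apply]
      exact prod_pow_add_single x _ i
    · rw [mulVec_multMat_not_mem a _ i β h]
      have hd : mdeg ((β : Fin n → ℕ) + Pi.single i 1) = m + 1 := by
        have h1 : mdeg (β : Fin n → ℕ) ≤ m := mem_Idx.mp β.2
        have h2 : ¬ mdeg ((β : Fin n → ℕ) + Pi.single i 1) ≤ m := fun hc => h (mem_Idx.mpr hc)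
        rw [mdeg_add, mdeg_single] at h2 ⊢
        omega
      have key : ∑ γ ∈ (Idx n m).attach,
          a ((β : Fin n → ℕ) + Pi.single i 1) ↑γ * monVec (Idx n m) x γ
          = ∑ γ ∈ Idx n m, a ((β : Fin n → ℕ) + Pi.single i 1) γ * ∏ j, x j ^ γ j := by
        simp only [monVec_apply]
        exact Finset.sum_attach (Idx n m)
          (fun γ => a ((β : Fin n → ℕ) + Pi.single i 1) γ * ∏ j, x j ^ γ j)
      rw [key, ← hsol _ hd, monVec_apply]
      exact prod_pow_add_single x _ i
  · intro heig α hα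
    obtain ⟨β, i, rfl, hd, -⟩ := exists_add_single (by omega : mdeg α ≠ 0)
    have hβ : β ∈ Idx n m := mem_Idx.mpr (by omega)
    have hout : (β + Pi.single i 1 : Fin n → ℕ) ∉ Idx n m := by
      intro hc; have := mem_Idx.mp hc; rw [mdeg_add, mdeg_single] at this; omega
    have key : ∑ γ ∈ (Idx n m).attach,
        a (β + Pi.single i 1) ↑γ * monVec (Idx n m) x γ
        = ∑ γ ∈ Idx n m, a (β + Pi.single i 1) γ * ∏ j, x j ^ γ j := by
      simp only [monVec_apply]
      exact Finset.sum_attach (Idx n m)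
        (fun γ => a (β + Pi.single i 1) γ * ∏ j, x j ^ γ j)
    have heq : ∑ γ ∈ (Idx n m).attach,
        a (β + Pi.single i 1) ↑γ * monVec (Idx n m) x γ = x i * ∏ j, x j ^ β j := by
      have h0 := congrFun (heig i) ⟨β, hβ⟩
      rw [mulVec_multMat_not_mem a _ i ⟨β, hβ⟩ hout] at h0
      exact h0
    rw [← key, heq]
    exact prod_pow_add_single x β i

end Stmt6Aux

namespace Stmt6Aux

variable {K : Type*} [Field K] {n m : ℕ} (a : (Fin n → ℕ) → (Fin n → ℕ) → K)

/-- Structure of joint eigenvectors: they are multiples of the monomial vector. -/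
lemma eigvec_structure (w : ↥(Idx n m) → K) (χ : Fin n → K)
    (hw : ∀ i, (multMat (Idx n m) a i).mulVec w = χ i • w) (β : ↥(Idx n m)) :
    w β = monVec (Idx n m) χ β * w ⟨0, zero_mem_Idx⟩ := by
  suffices h : ∀ k (β : ↥(Idx n m)), mdeg (β : Fin n → ℕ) = k →
      w β = monVec (Idx n m) χ β * w ⟨0, zero_mem_Idx⟩ from h _ β rfl
  intro k
  induction k using Nat.strong_induction_on with
  | _ k ih =>
    intro β hk
    by_cases h0 : mdeg (β : Fin n → ℕ) = 0
    · have hβ0 : β = ⟨0, zero_mem_Idx⟩ := by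
        refine Subtype.ext (funext fun j => ?_)
        have := (Finset.sum_eq_zero_iff.mp h0) j (Finset.mem_univ j)
        simpa using this
      rw [hβ0, monVec_zero, one_mul]
    · obtain ⟨β', i, hsplit, hdeg, hle⟩ := exists_add_single h0
      have hβ' : β' ∈ Idx n m := Idx_lower β.2 hle
      have hmem : β' + Pi.single i 1 ∈ Idx n m := by rw [← hsplit]; exact β.2
      have h0' := congrFun (hw i) ⟨β', hβ'⟩
      rw [mulVec_multMat_mem a w i ⟨β', hβ'⟩ hmem] at h0'
      have hββ : (⟨β' + Pi.single i 1, hmem⟩ : ↥(Idx n m)) = β := Subtype.ext hsplit.symm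
      rw [hββ] at h0'
      have hih := ih (mdeg β') (by omega) ⟨β', hβ'⟩ rfl
      rw [h0', Pi.smul_apply, smul_eq_mul, hih, monVec_apply, monVec_apply, ← mul_assoc]
      congr 1
      have : (∏ j, χ j ^ ((β' + Pi.single i 1 : Fin n → ℕ)) j) = χ i * ∏ j, χ j ^ β' j :=
        prod_pow_add_single χ β' i
      rw [show ((β : Fin n → ℕ)) = β' + Pi.single i 1 from hsplit, this]

/-- If there is a nonzero joint eigenvector with eigenvalues `χ i`, then `χ` is a solution
and the monomial vector itself is a joint eigenvector. -/
lemma sol_of_eigvec (w : ↥(Idx n m) → K) (χ : Fin n → K) (hw0 : w ≠ 0)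
    (hw : ∀ i, (multMat (Idx n m) a i).mulVec w = χ i • w) : IsSol m a χ := by
  set c := w ⟨0, zero_mem_Idx⟩ with hc
  have hwc : w = c • monVec (Idx n m) χ := by
    funext β
    rw [eigvec_structure a w χ hw β, Pi.smul_apply, smul_eq_mul, mul_comm]
  have hcne : c ≠ 0 := by
    intro h
    apply hw0
    rw [hwc, h, zero_smul]
  rw [isSol_iff_eigen]
  intro i
  have : (multMat (Idx n m) a i).mulVec (c⁻¹ • w) = χ i • (c⁻¹ • w) := by
    rw [Matrix.mulVec_smul, hw i, smul_comm]
  rwa [hwc, smul_smul, inv_mul_cancel₀ hcne, one_smul] at this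

open Classical in
/-- An index where two distinct points differ. -/
noncomputable def pickIdx (x y : Fin n → K) (h : x ≠ y) : Fin n :=
  (Function.ne_iff.mp h).choose

lemma pickIdx_spec (x y : Fin n → K) (h : x ≠ y) :
    x (pickIdx x y h) ≠ y (pickIdx x y h) :=
  (Function.ne_iff.mp h).choose_spec

open Classical in
/-- The operator `A_{i} - y_i • 1` where `i` is an index at which `x` and `y` differ. -/
noncomputable def opOf (x y : Fin n → K) : Module.End K (↥(Idx n m) → K) :=
  if h : x ≠ y then
    (multMat (Idx n m) a (pickIdx x y h)).mulVecLin - y (pickIdx x y h) • 1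
  else 1

open Classical in
/-- The corresponding scalar by which `opOf` acts on a joint eigenvector with eigenvalues `z`. -/
noncomputable def scOf (x y z : Fin n → K) : K :=
  if h : x ≠ y then z (pickIdx x y h) - y (pickIdx x y h) else 1

lemma opOf_apply_eigvec (x y z : Fin n → K) (w : ↥(Idx n m) → K)
    (hw : ∀ i, (multMat (Idx n m) a i).mulVec w = z i • w) :
    opOf a x y w = scOf x y z • w := by
  unfold opOf scOf
  by_cases h : x ≠ y
  · rw [dif_pos h, dif_pos h]
    simp only [LinearMap.sub_apply, Matrix.mulVecLin_apply, LinearMap.smul_apply,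
      Module.End.one_apply, hw, sub_smul]
  · rw [dif_neg h, dif_neg h, one_smul]
    rfl

lemma ops_apply_eigvec (x z : Fin n → K) (w : ↥(Idx n m) → K)
    (hw : ∀ i, (multMat (Idx n m) a i).mulVec w = z i • w) (l : List (Fin n → K)) :
    ((l.map (opOf a x)).prod) w = ((l.map (fun y => scOf x y z)).prod) • w := by
  induction l with
  | nil => simp
  | cons y t iht =>
    rw [List.map_cons, List.map_cons, List.prod_cons, List.prod_cons, Module.End.mul_apply,
      iht, _root_.map_smul, opOf_apply_eigvec a x y z w hw, smul_smul, mul_comm]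

/-- The monomial vectors of the solutions are linearly independent. -/
lemma linIndep_monVec_sol :
    LinearIndependent K
      (fun x : {x : Fin n → K | IsSol m a x} => monVec (Idx n m) (x : Fin n → K)) := by
  classical
  rw [linearIndependent_iff']
  intro s g hsum x hx
  set p : Fin n → K := (x : Fin n → K) with hp
  set l : List (Fin n → K) := List.map (fun σ : {x : Fin n → K | IsSol m a x} => Subtype.val σ) (s.erase x).toList with hl
  set Φ : Module.End K (↥(Idx n m) → K) := (l.map (opOf a p)).prod with hΦ
  have heig : ∀ σ : {x : Fin n → K | IsSol m a x},
      ∀ i, (multMat (Idx n m) a i).mulVec (monVec (Idx n m) (σ : Fin n → K))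
        = (σ : Fin n → K) i • monVec (Idx n m) (σ : Fin n → K) :=
    fun σ => (isSol_iff_eigen a _).mp σ.2
  have hΦv : ∀ σ : {x : Fin n → K | IsSol m a x},
      Φ (monVec (Idx n m) (σ : Fin n → K))
        = ((l.map (fun y => scOf p y (σ : Fin n → K))).prod) • monVec (Idx n m) (σ : Fin n → K) :=
    fun σ => ops_apply_eigvec a p _ _ (heig σ) l
  have hmeml : ∀ σ : {x : Fin n → K | IsSol m a x}, σ ∈ s.erase x → (σ : Fin n → K) ∈ l := by
    intro σ hσ
    rw [hl]
    exact List.mem_map_of_mem (Finset.mem_toList.mpr hσ)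
  have hmeml' : ∀ y ∈ l, ∃ τ, τ ∈ s.erase x ∧ (τ : Fin n → K) = y := by
    intro y hy
    rw [hl] at hy
    obtain ⟨τ, hτ, rfl⟩ := List.mem_map.mp hy
    exact ⟨τ, Finset.mem_toList.mp hτ, rfl⟩
  have hzero : ∀ σ ∈ s, σ ≠ x → ((l.map (fun y => scOf p y (σ : Fin n → K))).prod) = 0 := by
    intro σ hσ hσx
    apply List.prod_eq_zero
    rw [List.mem_map]
    refine ⟨(σ : Fin n → K), hmeml σ (Finset.mem_erase.mpr ⟨hσx, hσ⟩), ?_⟩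
    have hne : p ≠ (σ : Fin n → K) := fun hc =>
      hσx (Subtype.coe_injective hc.symm)
    rw [scOf, dif_pos hne, sub_self]
  have happ := congrArg Φ hsum
  rw [map_zero, map_sum] at happ
  simp_rw [_root_.map_smul, hΦv] at happ
  rw [Finset.sum_eq_single x (fun σ hσ hσx => by rw [hzero σ hσ hσx, zero_smul, smul_zero])
    (fun hxs => absurd hx hxs)] at happ
  set c : K := (l.map (fun y => scOf p y p)).prod with hcdef
  have hcne : c ≠ 0 := by
    apply List.prod_ne_zero
    intro h0
    obtain ⟨y, hy, hy0⟩ := List.mem_map.mp h0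
    obtain ⟨τ, hτ, rfl⟩ := hmeml' y hy
    have hne : p ≠ (τ : Fin n → K) :=
      fun hc => (Finset.mem_erase.mp hτ).1 (Subtype.coe_injective hc.symm)
    rw [scOf, dif_pos hne] at hy0
    exact pickIdx_spec p _ hne (sub_eq_zero.mp hy0)
  rw [smul_smul] at happ
  have := mul_eq_zero.mp ((smul_eq_zero.mp happ).resolve_right (monVec_ne_zero p))
  exact this.resolve_right hcne

end Stmt6Aux

namespace Stmt6Aux

open Module End

variable {K : Type*} [Field K]

/-- If the eigenspaces of `f` span, then generalized eigenspaces are eigenspaces. -/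
lemma maxGen_eq_eigen_of_sup {V : Type*} [AddCommGroup V] [Module K V]
    (f : Module.End K V) (hf : ⨆ μ, f.eigenspace μ = ⊤) (μ : K) :
    f.maxGenEigenspace μ = f.eigenspace μ := by
  refine le_antisymm ?_ ((f.genEigenspace μ).monotone le_top)
  have hsplit : (⨆ ν, f.eigenspace ν)
      = f.eigenspace μ ⊔ ⨆ ν, ⨆ _ : ν ≠ μ, f.eigenspace ν := by
    rw [iSup_split (fun ν => f.eigenspace ν) (fun ν => ν = μ)]
    congr 1
    simp
  have hdisj : Disjoint (f.maxGenEigenspace μ)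
      (⨆ ν, ⨆ _ : ν ≠ μ, f.eigenspace ν) := by
    refine Disjoint.mono_right ?_ ((f.independent_maxGenEigenspace) μ)
    exact iSup_mono fun ν => iSup_mono' fun hν =>
      ⟨hν, (f.genEigenspace ν).monotone le_top⟩
  have hmod := sup_inf_assoc_of_le (α := Submodule K V)
    (⨆ ν, ⨆ _ : ν ≠ μ, f.eigenspace ν)
    (show f.eigenspace μ ≤ f.maxGenEigenspace μ from (f.genEigenspace μ).monotone le_top)
  calc f.maxGenEigenspace μ = f.maxGenEigenspace μ ⊓ ⊤ := (inf_top_eq _).symm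
    _ = (f.eigenspace μ ⊔ ⨆ ν, ⨆ _ : ν ≠ μ, f.eigenspace ν) ⊓ f.maxGenEigenspace μ := by
        rw [← hf, hsplit, inf_comm]
    _ = f.eigenspace μ ⊔ ((⨆ ν, ⨆ _ : ν ≠ μ, f.eigenspace ν) ⊓ f.maxGenEigenspace μ) := hmod
    _ = f.eigenspace μ := by
        rw [inf_comm, hdisj.eq_bot, sup_bot_eq]
    _ ≤ f.eigenspace μ := le_rfl

/-- A diagonalizable matrix has a full supply of eigenvectors. -/
lemma sup_eigenspace_of_diagonalizable {ι : Type*} [Fintype ι] [DecidableEq ι]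
    (A : Matrix ι ι K) (h : Diagonalizable A) :
    ⨆ μ, Module.End.eigenspace A.mulVecLin μ = ⊤ := by
  obtain ⟨P, hdet, hdiag⟩ := h
  set D := P⁻¹ * A * P with hD
  have hAP : P * D = A * P := by
    rw [hD, ← Matrix.mul_assoc, ← Matrix.mul_assoc, Matrix.mul_nonsing_inv P hdet,
      Matrix.one_mul]
  have hcol : ∀ j, A.mulVec (fun b => P b j) = D j j • (fun b => P b j) := by
    intro j
    funext b
    have h1 : A.mulVec (fun b => P b j) b = (A * P) b j := by
      rw [Matrix.mul_apply, Matrix.mulVec, dotProduct]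
    rw [h1, ← hAP, Matrix.mul_apply, Finset.sum_eq_single j]
    · rw [Pi.smul_apply, smul_eq_mul, mul_comm]
    · intro c _ hc
      rw [show D c j = 0 from hdiag hc, mul_zero]
    · intro hj; exact absurd (Finset.mem_univ j) hj
  rw [eq_top_iff]
  intro v _
  have hv : v = P.mulVec (P⁻¹.mulVec v) := by
    rw [Matrix.mulVec_mulVec, Matrix.mul_nonsing_inv P hdet, Matrix.one_mulVec]
  have hsum : P.mulVec (P⁻¹.mulVec v)
      = ∑ j, (P⁻¹.mulVec v) j • (fun b => P b j) := by
    funext b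
    rw [Matrix.mulVec, dotProduct, Finset.sum_apply]
    exact Finset.sum_congr rfl fun j _ => by
      rw [Pi.smul_apply, smul_eq_mul, mul_comm]
  rw [hv, hsum]
  refine Submodule.sum_mem _ fun j _ => Submodule.smul_mem _ _ ?_
  refine (le_iSup (fun μ => Module.End.eigenspace A.mulVecLin μ) (D j j)) ?_
  rw [Module.End.mem_eigenspace_iff, Matrix.mulVecLin_apply]
  exact hcol j

end Stmt6Aux

namespace Stmt6Aux

variable {K : Type*} [Field K] {n m : ℕ} (a : (Fin n → ℕ) → (Fin n → ℕ) → K)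

lemma forward
    (hcard : {x : Fin n → K | IsSol m a x}.ncard = (Idx n m).card) :
    (∀ i j, multMat (Idx n m) a i * multMat (Idx n m) a j
        = multMat (Idx n m) a j * multMat (Idx n m) a i) ∧
      ∀ i, Diagonalizable (multMat (Idx n m) a i) := by
  classical
  have hNpos : 0 < (Idx n m).card := Finset.card_pos.mpr ⟨0, zero_mem_Idx⟩
  have hfin : {x : Fin n → K | IsSol m a x}.Finite := by
    by_contra h
    rw [Set.Infinite.ncard h] at hcard
    omega
  haveI := hfin.fintype
  have hs : Fintype.card {x : Fin n → K | IsSol m a x} = (Idx n m).card := by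
    rw [← Set.toFinset_card, ← Set.ncard_eq_toFinset_card']
    exact hcard
  have e : ↥(Idx n m) ≃ {x : Fin n → K | IsSol m a x} :=
    Fintype.equivOfCardEq (by rw [Fintype.card_coe, hs])
  have hindep : LinearIndependent K
      (fun γ : ↥(Idx n m) => monVec (Idx n m) ((e γ : Fin n → K))) :=
    (linIndep_monVec_sol a).comp e e.injective
  set P : Matrix ↥(Idx n m) ↥(Idx n m) K :=
    Matrix.of fun b γ => monVec (Idx n m) ((e γ : Fin n → K)) b with hP
  have hPunit : IsUnit P := by
    rw [← Matrix.linearIndependent_cols_iff_isUnit]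
    exact hindep
  have hPdet : IsUnit P.det := (Matrix.isUnit_iff_isUnit_det P).mp hPunit
  set D : Fin n → Matrix ↥(Idx n m) ↥(Idx n m) K :=
    fun i => Matrix.diagonal (fun γ => (e γ : Fin n → K) i) with hDdef
  have key : ∀ i, multMat (Idx n m) a i * P = P * D i := by
    intro i
    ext b γ
    have h1 : (multMat (Idx n m) a i * P) b γ
        = (multMat (Idx n m) a i).mulVec (monVec (Idx n m) ((e γ : Fin n → K))) b := by
      rw [Matrix.mul_apply, Matrix.mulVec, dotProduct]
      rfl
    have h2 := congrFun ((isSol_iff_eigen a ((e γ : Fin n → K))).mp (e γ).2 i) b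
    rw [h1, h2, hDdef, Matrix.mul_diagonal, Pi.smul_apply, smul_eq_mul, mul_comm]
    rfl
  have hAi : ∀ i, multMat (Idx n m) a i = P * D i * P⁻¹ := by
    intro i
    rw [← key i, Matrix.mul_assoc, Matrix.mul_nonsing_inv P hPdet, Matrix.mul_one]
  have hDcomm : ∀ i j, D i * D j = D j * D i := by
    intro i j
    rw [hDdef]
    simp only [Matrix.diagonal_mul_diagonal]
    exact congrArg Matrix.diagonal (funext fun γ => mul_comm _ _)
  have hnorm : ∀ i j, (P * D i * P⁻¹) * (P * D j * P⁻¹) = P * (D i * (D j * P⁻¹)) := by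
    intro i j
    simp only [Matrix.mul_assoc]
    rw [show P⁻¹ * (P * (D j * P⁻¹)) = D j * P⁻¹ from by
      rw [← Matrix.mul_assoc, Matrix.nonsing_inv_mul P hPdet, Matrix.one_mul]]
  constructor
  · intro i j
    rw [hAi i, hAi j, hnorm i j, hnorm j i]
    congr 1
    rw [← Matrix.mul_assoc, ← Matrix.mul_assoc, hDcomm i j]
  · intro i
    refine ⟨P, hPdet, ?_⟩
    have : P⁻¹ * multMat (Idx n m) a i * P = D i := by
      rw [Matrix.mul_assoc, key i, ← Matrix.mul_assoc, Matrix.nonsing_inv_mul P hPdet,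
        Matrix.one_mul]
    rw [this, hDdef]
    exact Matrix.isDiag_diagonal _

lemma backward
    (hcomm : ∀ i j, multMat (Idx n m) a i * multMat (Idx n m) a j
        = multMat (Idx n m) a j * multMat (Idx n m) a i)
    (hdiag : ∀ i, Diagonalizable (multMat (Idx n m) a i)) :
    {x : Fin n → K | IsSol m a x}.ncard = (Idx n m).card := by
  classical
  set f : Fin n → Module.End K (↥(Idx n m) → K) :=
    fun i => (multMat (Idx n m) a i).mulVecLin with hf
  have hfcomm : Pairwise fun i j => Commute (f i) (f j) := by
    intro i j _
    show f i * f j = f j * f i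
    rw [hf]
    simp only [Module.End.mul_eq_comp, ← Matrix.mulVecLin_mul, hcomm i j]
  have hsup : ∀ i, ⨆ μ, Module.End.eigenspace (f i) μ = ⊤ :=
    fun i => sup_eigenspace_of_diagonalizable _ (hdiag i)
  have hmaxeq : ∀ i μ, (f i).maxGenEigenspace μ = Module.End.eigenspace (f i) μ :=
    fun i => maxGen_eq_eigen_of_sup (f i) (hsup i)
  have htop : ⨆ χ : Fin n → K, ⨅ i, (f i).maxGenEigenspace (χ i) = ⊤ :=
    Module.End.iSup_iInf_maxGenEigenspace_eq_top_of_iSup_maxGenEigenspace_eq_top_of_commute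
      f hfcomm (fun i => by simp_rw [hmaxeq]; exact hsup i)
  have htop' : ⨆ χ : Fin n → K, ⨅ i, Module.End.eigenspace (f i) (χ i) = ⊤ := by
    simp_rw [← hmaxeq]; exact htop
  -- span of monomial vectors of solutions is everything
  have hspan : ⊤ ≤ Submodule.span K
      ((fun x => monVec (Idx n m) x) '' {x : Fin n → K | IsSol m a x}) := by
    rw [← htop']
    apply iSup_le
    intro χ w hw
    have hw' : ∀ i, (multMat (Idx n m) a i).mulVec w = χ i • w := by
      intro i
      have h1 := (Submodule.mem_iInf _).mp hw i
      rw [Module.End.mem_eigenspace_iff] at h1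
      rw [← Matrix.mulVecLin_apply]
      exact h1
    have hwv : w = w ⟨0, zero_mem_Idx⟩ • monVec (Idx n m) χ := by
      funext β
      rw [eigvec_structure a w χ hw' β, Pi.smul_apply, smul_eq_mul, mul_comm]
    by_cases hc : w ⟨0, zero_mem_Idx⟩ = 0
    · rw [hwv, hc, zero_smul]
      exact Submodule.zero_mem _
    · have hwne : w ≠ 0 := by
        intro h0
        exact hc (by rw [h0]; rfl)
      have hsol : IsSol m a χ := sol_of_eigvec a w χ hwne hw'
      rw [hwv]
      exact Submodule.smul_mem _ _ (Submodule.subset_span ⟨χ, hsol, rfl⟩)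
  -- the solution set is finite
  have hli := linIndep_monVec_sol (K := K) (n := n) (m := m) a
  have hfinite : Finite {x : Fin n → K | IsSol m a x} :=
    Cardinal.lt_aleph0_iff_finite.mp hli.lt_aleph0_of_finite
  have hfin : {x : Fin n → K | IsSol m a x}.Finite := Set.finite_coe_iff.mp hfinite
  haveI := hfin.fintype
  have hrank : Module.finrank K (↥(Idx n m) → K) = (Idx n m).card := by
    rw [Module.finrank_pi, Fintype.card_coe]
  -- upper bound
  have hub : {x : Fin n → K | IsSol m a x}.ncard ≤ (Idx n m).card := by
    rw [← Nat.card_coe_set_eq, Nat.card_eq_fintype_card, ← hrank]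
    exact hli.fintype_card_le_finrank
  -- lower bound
  have hlb : (Idx n m).card ≤ {x : Fin n → K | IsSol m a x}.ncard := by
    have himfin : ((fun x => monVec (Idx n m) x) '' {x : Fin n → K | IsSol m a x}).Finite :=
      hfin.image _
    haveI := himfin.fintype
    have h1 : Submodule.span K
        ((fun x => monVec (Idx n m) x) '' {x : Fin n → K | IsSol m a x}) = ⊤ :=
      le_antisymm le_top hspan
    have h2 : (Idx n m).card ≤
        ((fun x => monVec (Idx n m) x) '' {x : Fin n → K | IsSol m a x}).toFinset.card := by
      rw [← hrank]
      calc Module.finrank K (↥(Idx n m) → K)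
          = Module.finrank K (⊤ : Submodule K (↥(Idx n m) → K)) := (finrank_top K _).symm
        _ = Module.finrank K (Submodule.span K
            ((fun x => monVec (Idx n m) x) '' {x : Fin n → K | IsSol m a x})) := by rw [h1]
        _ ≤ _ := finrank_span_le_card _
    calc (Idx n m).card
        ≤ ((fun x => monVec (Idx n m) x) '' {x : Fin n → K | IsSol m a x}).toFinset.card := h2
      _ = ((fun x => monVec (Idx n m) x) '' {x : Fin n → K | IsSol m a x}).ncard :=
          (Set.ncard_eq_toFinset_card' _).symm
      _ ≤ {x : Fin n → K | IsSol m a x}.ncard := Set.ncard_image_le hfin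
  omega

end Stmt6Aux


/-- The system has the maximal possible number `#I` of distinct solutions iff the
multiplication matrices pairwise commute and each is diagonalizable. -/
theorem stmt_6 {K : Type*} [Field K] [IsAlgClosed K] {n m : ℕ}
    (a : (Fin n → ℕ) → (Fin n → ℕ) → K) :
    {x : Fin n → K | IsSol m a x}.ncard = (Idx n m).card ↔
      (∀ i j, multMat (Idx n m) a i * multMat (Idx n m) a j
          = multMat (Idx n m) a j * multMat (Idx n m) a i) ∧
      ∀ i, Diagonalizable (multMat (Idx n m) a i) := by
  constructor
  · exact Stmt6Aux.forward a
  · rintro ⟨h1, h2⟩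
    exact Stmt6Aux.backward a h1 h2
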